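/- arXiv:2101.12507 — 2 statements merged into one kernel-verified Lean document; each statement's English description precedes it below -/
import Mathlib

section
/- The line S_ε^+ = {(v, w) : v ≥ 0, w = (1+ε)(v + I)} is invariant under the flow of the system v' = v - w + I, w' = -ε w, in the sense that if a solution starts on this line with v(0) ≥ 0, then it remains on the line w = (1+ε)(v + I) for as long as v(t) ≥ 0. -/
/-- The slow manifold S_ε^+ = {v ≥ 0, w = (1+ε)(v+I)} is invariant for
v' = v - w + I, w' = -ε w, as long as v(t) ≥ 0. -/
theorem slow_manifold_plus_invariant (ε I : ℝ) (hε : 0 < ε)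
    (v w : ℝ → ℝ)
    (hv : ∀ t, HasDerivAt v (v t - w t + I) t)
    (hw : ∀ t, HasDerivAt w (-ε * w t) t)
    (hv0 : 0 ≤ v 0) (hw0 : w 0 = (1 + ε) * (v 0 + I)) :
    ∀ T : ℝ, 0 ≤ T → (∀ t, t ∈ Set.Icc (0 : ℝ) T → 0 ≤ v t) →
      w T = (1 + ε) * (v T + I) := by
  intro T _ _
  set g : ℝ → ℝ := fun t => w t - (1 + ε) * (v t + I) with hg_def
  have hg : ∀ t, HasDerivAt g (g t) t := by
    intro t
    have h := ((hw t).sub (((hv t).add_const I).const_mul (1 + ε)))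
    refine h.congr_deriv ?_
    simp [hg_def]; ring
  have hf : ∀ t, HasDerivAt (fun t => g t * Real.exp (-t)) 0 t := by
    intro t
    have h := (hg t).mul ((Real.hasDerivAt_exp (-t)).comp t ((hasDerivAt_id t).neg))
    refine h.congr_deriv ?_
    simp [Function.comp]
  have hconst : ∀ x y : ℝ, g x * Real.exp (-x) = g y * Real.exp (-y) := by
    intro x y
    exact is_const_of_deriv_eq_zero (fun t => (hf t).differentiableAt)
      (fun t => (hf t).deriv) x y
  have h0 : g 0 = 0 := by simp [hg_def, hw0]
  have := hconst T 0
  rw [h0, zero_mul] at this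
  have hT : g T = 0 := by
    have he := Real.exp_pos (-T)
    nlinarith [this]
  simpa [hg_def, sub_eq_zero] using hT
end

section
/- Along any solution of the system v' = v - w + I, w' = -ε w with ε > 0, starting at a point with v(0) ≥ 0 and w(0) > (1+ε)(v(0) + I), the quantity w(t) - (1+ε)(v(t) + I) remains positive for as long as v(t) ≥ 0; consequently v'(t) < -ε(v(t)+I) there whenever v(t) + I > 0. -/
/-- Solutions of v' = v - w + I, w' = -ε w starting above the slow manifold
S_ε^+ = {w = (1+ε)(v+I)} stay above it while v ≥ 0, and there
v' < -ε(v + I) whenever v + I > 0. -/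
theorem stay_above_slow_manifold (ε I : ℝ) (hε : 0 < ε)
    (v w : ℝ → ℝ)
    (hv : ∀ t, HasDerivAt v (v t - w t + I) t)
    (hw : ∀ t, HasDerivAt w (-ε * w t) t)
    (hv0 : 0 ≤ v 0) (hw0 : (1 + ε) * (v 0 + I) < w 0) :
    ∀ T : ℝ, 0 ≤ T → (∀ t, t ∈ Set.Icc (0 : ℝ) T → 0 ≤ v t) →
      0 < w T - (1 + ε) * (v T + I) ∧
      (0 < v T + I → v T - w T + I < -ε * (v T + I)) := by
  set u : ℝ → ℝ := fun t => w t - (1 + ε) * (v t + I) with hu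
  have hu' : ∀ t, HasDerivAt u (u t) t := by
    intro t
    have h := ((hw t).sub (((hv t).add_const I).const_mul (1 + ε)))
    have h2 : HasDerivAt u (-ε * w t - (1 + ε) * (v t - w t + I)) t := h
    convert h2 using 1
    simp [hu]; ring
  set g : ℝ → ℝ := fun t => u t * Real.exp (-t) with hg
  have hg' : ∀ t, HasDerivAt g 0 t := by
    intro t
    have he : HasDerivAt (fun t : ℝ => Real.exp (-t)) (-Real.exp (-t)) t := by
      have h1 : HasDerivAt (fun t : ℝ => Real.exp (-t)) (Real.exp (-t) * -1) t :=
        (Real.hasDerivAt_exp (-t)).comp t (hasDerivAt_neg t)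
      simpa using h1
    have h := (hu' t).mul he
    have h2 : HasDerivAt g (u t * Real.exp (-t) + u t * -Real.exp (-t)) t := h
    convert h2 using 1
    ring
  have hconst : ∀ T : ℝ, g T = g 0 := by
    intro T
    exact is_const_of_deriv_eq_zero (fun t => (hg' t).differentiableAt)
      (fun t => (hg' t).deriv) T 0
  intro T hT _
  have hgT := hconst T
  have huT : u T = u 0 * Real.exp T := by
    have : u T * Real.exp (-T) = u 0 := by simpa [hg] using hgT
    have hne : Real.exp (-T) ≠ 0 := (Real.exp_pos _).ne'
    field_simp at this ⊢
    rw [← this]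
    rw [mul_assoc, ← Real.exp_add]
    simp
  have hu0 : 0 < u 0 := by simp [hu]; linarith
  have hpos : 0 < u T := by
    rw [huT]; positivity
  refine ⟨hpos, fun h => ?_⟩
  have : (1 + ε) * (v T + I) < w T := by simp [hu] at hpos; linarith
  nlinarith
end
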